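/- The q-deformed W(2,2) Hom-Lie algebra (W^q, [·,·], α) with basis {L_n, W_n : n ∈ ℤ}, brackets [L_m, L_n] = [m-n] L_{m+n}, [L_m, W_n] = [m-n] W_{m+n}, [W_m, W_n] = 0, and twisting map α(L_n) = (q^n + q^{-n}) L_n, α(W_n) = (q^n + q^{-n}) W_n, is multiplicative if and only if q² = -1. -/

import Mathlib

open Classical in
/-- The q-deformed W(2,2) Hom-Lie algebra is multiplicative if and only if q² = -1. -/
theorem qW22_multiplicative_iff {K M : Type*} [Field K] [CharZero K]
    [AddCommGroup M] [Module K M]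
    (q : K) (hq : q ≠ 0) (b : Module.Basis (ℤ ⊕ ℤ) K M)
    (bn : ℤ → K)
    (hbn : ∀ n : ℤ, bn n =
      if q = 1 then (n : K)
      else if q = -1 then (-1 : K) ^ (n - 1) * (n : K)
      else (q ^ n - q ^ (-n)) / (q - q⁻¹))
    (br : M →ₗ[K] M →ₗ[K] M)
    (hLL : ∀ m n : ℤ, br (b (Sum.inl m)) (b (Sum.inl n)) = bn (m - n) • b (Sum.inl (m + n)))
    (hLW : ∀ m n : ℤ, br (b (Sum.inl m)) (b (Sum.inr n)) = bn (m - n) • b (Sum.inr (m + n)))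
    (hWL : ∀ m n : ℤ, br (b (Sum.inr m)) (b (Sum.inl n)) = bn (m - n) • b (Sum.inr (m + n)))
    (hWW : ∀ m n : ℤ, br (b (Sum.inr m)) (b (Sum.inr n)) = 0)
    (α : M →ₗ[K] M)
    (hαL : ∀ n : ℤ, α (b (Sum.inl n)) = (q ^ n + q ^ (-n)) • b (Sum.inl n))
    (hαW : ∀ n : ℤ, α (b (Sum.inr n)) = (q ^ n + q ^ (-n)) • b (Sum.inr n)) :
    (∀ x y : M, α (br x y) = br (α x) (α y)) ↔ q ^ 2 = -1 := by
  constructor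
  · intro h
    have hbn1 : bn 1 = 1 := by
      rw [hbn]
      rcases eq_or_ne q 1 with h1 | h1
      · simp [h1]
      rcases eq_or_ne q (-1) with h2 | h2
      · simp [h1, h2]
      · rw [if_neg h1, if_neg h2]
        have hd : q - q⁻¹ ≠ 0 := by
          intro hd0
          have hqq : q * q = 1 := by
            have h3 := sub_eq_zero.mp hd0
            field_simp at h3
            linear_combination h3
          have h4 : (q - 1) * (q + 1) = 0 := by linear_combination hqq
          rcases mul_eq_zero.mp h4 with h5 | h5
          · exact h1 (sub_eq_zero.mp h5)
          · exact h2 (eq_neg_of_add_eq_zero_left h5)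
        rw [zpow_one, zpow_neg, zpow_one]
        exact div_self hd
    have h10 := h (b (Sum.inl 1)) (b (Sum.inl 0))
    rw [hLL 1 0, map_smul, hαL, hαL 1, hαL 0] at h10
    simp only [map_smul, LinearMap.smul_apply, hLL 1 0, smul_smul] at h10
    have hs := congrArg (fun v => b.repr v (Sum.inl (1 + 0))) h10
    simp only [map_smul, Module.Basis.repr_self, Finsupp.smul_apply, Finsupp.single_eq_same,
      smul_eq_mul, mul_one] at hs
    have e10 : (1 : ℤ) - 0 = 1 := by norm_num
    rw [e10, hbn1] at hs
    norm_num [zpow_one, zpow_neg, zpow_zero] at hs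
    have hsum : q + q⁻¹ = 0 := by linear_combination -hs
    have hqi : q * q⁻¹ = 1 := mul_inv_cancel₀ hq
    linear_combination q * hsum - hqi
  · intro hq2
    have hq1 : q ≠ 1 := by rintro rfl; norm_num at hq2
    have hqm1 : q ≠ -1 := by rintro rfl; norm_num at hq2
    have key : ∀ k : ℤ, (q ^ k + q ^ (-k)) * bn k = 0 := by
      intro k
      rw [hbn k, if_neg hq1, if_neg hqm1, mul_div_assoc']
      have h1 : q ^ k * q ^ k = (-1 : K) ^ k := by
        rw [← mul_zpow, ← sq, hq2]
      have h2 : q ^ (-k) * q ^ (-k) = (-1 : K) ^ k := by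
        rw [← mul_zpow, ← sq, hq2]
        rw [zpow_neg, ← inv_zpow, inv_neg, inv_one]
      have hnum : (q ^ k + q ^ (-k)) * (q ^ k - q ^ (-k)) = 0 := by
        linear_combination h1 - h2
      rw [hnum, zero_div]
    have main : ∀ m n : ℤ, bn (m - n) * (q ^ (m + n) + q ^ (-(m + n))) =
        (q ^ m + q ^ (-m)) * ((q ^ n + q ^ (-n)) * bn (m - n)) := by
      intro m n
      have hk := key (m - n)
      have e1 : q ^ (m + n) = q ^ m * q ^ n := zpow_add₀ hq m n
      have e2 : q ^ (-(m + n)) = q ^ (-m) * q ^ (-n) := by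
        rw [neg_add, zpow_add₀ hq]
      have e3 : q ^ (m - n) = q ^ m * q ^ (-n) := by
        rw [sub_eq_add_neg, zpow_add₀ hq]
      have e4 : q ^ (-(m - n)) = q ^ (-m) * q ^ n := by
        rw [neg_sub, sub_eq_add_neg, zpow_add₀ hq, mul_comm]
      rw [e3, e4] at hk
      rw [e1, e2]
      linear_combination -hk
    suffices hsuf : br.compr₂ α = (br.compl₂ α).comp α by
      intro x y
      have := LinearMap.congr_fun (LinearMap.congr_fun hsuf x) y
      simpa using this
    refine b.ext fun i => b.ext fun j => ?_
    simp only [LinearMap.compr₂_apply, LinearMap.compl₂_apply, LinearMap.comp_apply]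
    rcases i with m | m <;> rcases j with n | n
    · simp only [hLL, hαL, map_smul, LinearMap.smul_apply, smul_smul]
      rw [main]; congr 1; ring
    · simp only [hLW, hαL, hαW, map_smul, LinearMap.smul_apply, smul_smul]
      rw [main]; congr 1; ring
    · simp only [hWL, hαL, hαW, map_smul, LinearMap.smul_apply, smul_smul]
      rw [main]; congr 1; ring
    · simp [hWW, hαW, map_smul]
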